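/- Let G and H be finite connected nontrivial simple graphs. Then β(G_SR ⊠ H_SR) ≥ β((G ⊠ H)_SR) ≥ β(G_SR ⊕ H_SR), where β denotes the independence number. -/

import Mathlib

open SimpleGraph Finset

variable {α β : Type*}

/-- The strong product of two simple graphs: distinct vertices `(a,b)` and `(c,d)` are adjacent
iff (`a = c` or `a ~ c`) and (`b = d` or `b ~ d`). -/
def strongProd (G : SimpleGraph α) (H : SimpleGraph β) : SimpleGraph (α × β) where
  Adj x y := x ≠ y ∧ (x.1 = y.1 ∨ G.Adj x.1 y.1) ∧ (x.2 = y.2 ∨ H.Adj x.2 y.2)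
  symm := ⟨by
    rintro x y ⟨h1, h2, h3⟩
    exact ⟨h1.symm, h2.imp Eq.symm (fun a => a.symm), h3.imp Eq.symm (fun a => a.symm)⟩⟩
  loopless := ⟨fun x h => h.1 rfl⟩

/-- The Cartesian sum (disjunctive product) of two simple graphs. -/
def cartSum (G : SimpleGraph α) (H : SimpleGraph β) : SimpleGraph (α × β) where
  Adj x y := x ≠ y ∧ (G.Adj x.1 y.1 ∨ H.Adj x.2 y.2)
  symm := ⟨by
    rintro x y ⟨h1, h2⟩
    exact ⟨h1.symm, h2.imp (fun a => a.symm) (fun a => a.symm)⟩⟩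
  loopless := ⟨fun x h => h.1 rfl⟩

/-- `u` is maximally distant from `v` in `G`. -/
def MaximallyDistantFrom (G : SimpleGraph α) (u v : α) : Prop :=
  ∀ w, G.Adj u w → G.dist v w ≤ G.dist u v

/-- `u` and `v` are mutually maximally distant in `G`. -/
def MutuallyMaximallyDistant (G : SimpleGraph α) (u v : α) : Prop :=
  MaximallyDistantFrom G u v ∧ MaximallyDistantFrom G v u

/-- The strong resolving graph of `G`. -/
def strongResolvingGraph (G : SimpleGraph α) : SimpleGraph α where
  Adj u v := u ≠ v ∧ MutuallyMaximallyDistant G u v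
  symm := ⟨by rintro u v ⟨h1, h2, h3⟩; exact ⟨h1.symm, h3, h2⟩⟩
  loopless := ⟨fun x h => h.1 rfl⟩

/-- A finset of vertices is independent if no two of its (distinct) members are adjacent. -/
def IsIndepFinset (G : SimpleGraph α) (s : Finset α) : Prop :=
  ∀ u ∈ s, ∀ v ∈ s, u ≠ v → ¬ G.Adj u v

/-- The independence number `β(G)`. -/
noncomputable def indepNum (G : SimpleGraph α) [Fintype α] : ℕ :=
  sSup {n | ∃ s : Finset α, IsIndepFinset G s ∧ s.card = n}

/-- `w` strongly resolves `u` and `v` in `G`. -/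
def StronglyResolves (G : SimpleGraph α) (w u v : α) : Prop :=
  G.dist w u = G.dist w v + G.dist v u ∨ G.dist w v = G.dist w u + G.dist u v

/-- A strong metric generator for `G`. -/
def IsStrongMetricGenerator (G : SimpleGraph α) (s : Finset α) : Prop :=
  ∀ u v : α, u ≠ v → ∃ w ∈ s, StronglyResolves G w u v

/-- The strong metric dimension of `G`. -/
noncomputable def sdim (G : SimpleGraph α) [Fintype α] : ℕ :=
  sInf {n | ∃ s : Finset α, IsStrongMetricGenerator G s ∧ s.card = n}

section Aux

variable {G : SimpleGraph α} {H : SimpleGraph β}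

/-- hom fixing the first coordinate -/
def homRightAux (G : SimpleGraph α) (H : SimpleGraph β) (a : α) : H →g strongProd G H where
  toFun x := (a, x)
  map_rel' := fun h => ⟨fun he => h.ne (congrArg Prod.snd he), Or.inl rfl, Or.inr h⟩

/-- hom fixing the second coordinate -/
def homLeftAux (G : SimpleGraph α) (H : SimpleGraph β) (b : β) : G →g strongProd G H where
  toFun x := (x, b)
  map_rel' := fun h => ⟨fun he => h.ne (congrArg Prod.fst he), Or.inr h, Or.inl rfl⟩

lemma exists_walk_max {a c : α} {b d : β} (p : G.Walk a c) (q : H.Walk b d) :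
    ∃ r : (strongProd G H).Walk (a, b) (c, d), r.length = max p.length q.length := by
  induction p generalizing b d q with
  | nil => exact ⟨q.map (homRightAux G H _), (Walk.length_map _ _).trans (by simp)⟩
  | @cons a a' c hadj p ih =>
    cases q with
    | nil => exact ⟨(Walk.cons hadj p).map (homLeftAux G H _), (Walk.length_map _ _).trans (by simp)⟩
    | @cons b b' d hadj' q' =>
      obtain ⟨r, hr⟩ := ih q'
      refine ⟨Walk.cons ⟨fun he => hadj.ne (congrArg Prod.fst he), Or.inr hadj, Or.inr hadj'⟩ r,
        (Walk.length_cons _ _).trans (by simp [hr])⟩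

lemma adj_dist_le_one {u v : α} (h : G.Adj u v) : G.dist u v ≤ 1 := by
  simpa using SimpleGraph.dist_le (Walk.cons h Walk.nil)

lemma dist_proj_le (hG : G.Connected) (hH : H.Connected) {x y : α × β}
    (r : (strongProd G H).Walk x y) :
    G.dist x.1 y.1 ≤ r.length ∧ H.dist x.2 y.2 ≤ r.length := by
  induction r with
  | nil => simp
  | @cons x z y h p ih =>
    obtain ⟨ih1, ih2⟩ := ih
    simp only [Walk.length_cons]
    constructor
    · have ht := hG.dist_triangle (u := x.1) (v := z.1) (w := y.1)
      have hle : G.dist x.1 z.1 ≤ 1 := by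
        rcases h.2.1 with h2 | h2
        · rw [h2, SimpleGraph.dist_self]; omega
        · exact adj_dist_le_one h2
      omega
    · have ht := hH.dist_triangle (u := x.2) (v := z.2) (w := y.2)
      have hle : H.dist x.2 z.2 ≤ 1 := by
        rcases h.2.2 with h2 | h2
        · rw [h2, SimpleGraph.dist_self]; omega
        · exact adj_dist_le_one h2
      omega

lemma strongProd_dist (hG : G.Connected) (hH : H.Connected) (a c : α) (b d : β) :
    (strongProd G H).dist (a, b) (c, d) = max (G.dist a c) (H.dist b d) := by
  obtain ⟨p, hp⟩ := hG.exists_walk_length_eq_dist a c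
  obtain ⟨q, hq⟩ := hH.exists_walk_length_eq_dist b d
  obtain ⟨r, hr⟩ := exists_walk_max p q
  have hub := SimpleGraph.dist_le r
  have hreach : (strongProd G H).Reachable (a, b) (c, d) := ⟨r⟩
  obtain ⟨s, hs⟩ := hreach.exists_walk_length_eq_dist
  have := dist_proj_le hG hH s
  simp only [hs] at this
  omega

lemma mdf_strongProd (hG : G.Connected) (hH : H.Connected) {a c : α} {b d : β}
    (hne : (a, b) ≠ (c, d))
    (h1 : a = c ∨ MutuallyMaximallyDistant G a c)
    (h2 : b = d ∨ MutuallyMaximallyDistant H b d) :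
    MaximallyDistantFrom (strongProd G H) (a, b) (c, d) := by
  rintro ⟨w1, w2⟩ ⟨hw0, hw1, hw2⟩
  rw [strongProd_dist hG hH, strongProd_dist hG hH]
  simp only at hw1 hw2
  have hca : G.dist c a = G.dist a c := SimpleGraph.dist_comm
  have hdb : H.dist d b = H.dist b d := SimpleGraph.dist_comm
  have key1 : G.dist c w1 ≤ max (G.dist a c) (H.dist b d) := by
    rcases hw1 with h | h
    · rw [← h]; omega
    · rcases h1 with heq | hmmd
      · have hbd : b ≠ d := fun hb => hne (by rw [heq, hb])
        have hpos : 0 < H.dist b d := hH.pos_dist_of_ne hbd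
        have hle : G.dist c w1 ≤ 1 := heq ▸ adj_dist_le_one h
        omega
      · exact le_trans (hmmd.1 w1 h) (le_max_left _ _)
  have key2 : H.dist d w2 ≤ max (G.dist a c) (H.dist b d) := by
    rcases hw2 with h | h
    · rw [← h]; omega
    · rcases h2 with heq | hmmd
      · have hac : a ≠ c := fun ha => hne (by rw [ha, heq])
        have hpos : 0 < G.dist a c := hG.pos_dist_of_ne hac
        have hle : H.dist d w2 ≤ 1 := heq ▸ adj_dist_le_one h
        omega
      · exact le_trans (hmmd.1 w2 h) (le_max_right _ _)
  omega

lemma mmd_of_strongProd_mmd (hG : G.Connected) (hH : H.Connected) {a c : α} {b d : β}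
    (hne : (a, b) ≠ (c, d))
    (h : MutuallyMaximallyDistant (strongProd G H) (a, b) (c, d)) :
    (a ≠ c ∧ MutuallyMaximallyDistant G a c) ∨ (b ≠ d ∧ MutuallyMaximallyDistant H b d) := by
  have hca : G.dist c a = G.dist a c := SimpleGraph.dist_comm
  have hdb : H.dist d b = H.dist b d := SimpleGraph.dist_comm
  rcases le_or_gt (H.dist b d) (G.dist a c) with hle | hlt
  · left
    have hac : a ≠ c := by
      intro heq
      have h0 : G.dist a c = 0 := by rw [heq, SimpleGraph.dist_self]
      have hbd : b ≠ d := fun hb => hne (by rw [heq, hb])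
      have := hH.pos_dist_of_ne hbd
      omega
    refine ⟨hac, ?_, ?_⟩
    · intro w hw
      have hadj : (strongProd G H).Adj (a, b) (w, b) :=
        ⟨fun he => hw.ne (congrArg Prod.fst he), Or.inr hw, Or.inl rfl⟩
      have := h.1 (w, b) hadj
      rw [strongProd_dist hG hH, strongProd_dist hG hH] at this
      omega
    · intro w hw
      have hadj : (strongProd G H).Adj (c, d) (w, d) :=
        ⟨fun he => hw.ne (congrArg Prod.fst he), Or.inr hw, Or.inl rfl⟩
      have := h.2 (w, d) hadj
      rw [strongProd_dist hG hH, strongProd_dist hG hH] at this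
      omega
  · right
    have hbd : b ≠ d := by
      intro heq
      have h0 : H.dist b d = 0 := by rw [heq, SimpleGraph.dist_self]
      omega
    refine ⟨hbd, ?_, ?_⟩
    · intro w hw
      have hadj : (strongProd G H).Adj (a, b) (a, w) :=
        ⟨fun he => hw.ne (congrArg Prod.snd he), Or.inl rfl, Or.inr hw⟩
      have := h.1 (a, w) hadj
      rw [strongProd_dist hG hH, strongProd_dist hG hH] at this
      omega
    · intro w hw
      have hadj : (strongProd G H).Adj (c, d) (c, w) :=
        ⟨fun he => hw.ne (congrArg Prod.snd he), Or.inl rfl, Or.inr hw⟩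
      have := h.2 (c, w) hadj
      rw [strongProd_dist hG hH, strongProd_dist hG hH] at this
      omega

lemma indepNum_le_of_le [Fintype α] {A B : SimpleGraph α}
    (h : ∀ u v, A.Adj u v → B.Adj u v) : _root_.indepNum B ≤ _root_.indepNum A := by
  apply csSup_le_csSup
  · exact ⟨Fintype.card α, by rintro n ⟨s, _, rfl⟩; exact s.card_le_univ⟩
  · exact ⟨0, ∅, fun u hu => by simp at hu, rfl⟩
  · rintro n ⟨s, hs, rfl⟩
    exact ⟨s, fun u hu v hv huv hadj => hs u hu v hv huv (h u v hadj), rfl⟩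

end Aux

theorem indepNum_SR_chain [Fintype α] [Fintype β]
    (G : SimpleGraph α) (H : SimpleGraph β)
    (hG : G.Connected) (hGn : Nontrivial α) (hH : H.Connected) (hHn : Nontrivial β) :
    _root_.indepNum (strongProd (strongResolvingGraph G) (strongResolvingGraph H)) ≥
      _root_.indepNum (strongResolvingGraph (strongProd G H)) ∧
    _root_.indepNum (strongResolvingGraph (strongProd G H)) ≥
      _root_.indepNum (cartSum (strongResolvingGraph G) (strongResolvingGraph H)) := by
  constructor
  · apply indepNum_le_of_le
    rintro ⟨a, b⟩ ⟨c, d⟩ ⟨hne, h1, h2⟩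
    simp only [strongResolvingGraph] at h1 h2
    refine ⟨hne, ?_, ?_⟩
    · exact mdf_strongProd hG hH hne (h1.imp id And.right) (h2.imp id And.right)
    · exact mdf_strongProd hG hH (Ne.symm hne)
        (h1.imp Eq.symm fun h => ⟨h.2.2, h.2.1⟩)
        (h2.imp Eq.symm fun h => ⟨h.2.2, h.2.1⟩)
  · apply indepNum_le_of_le
    rintro ⟨a, b⟩ ⟨c, d⟩ ⟨hne, hmmd⟩
    exact ⟨hne, mmd_of_strongProd_mmd hG hH hne hmmd⟩
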